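/- Let F : [S,T]×ℝ^n ⇒ ℝ^n take values nonempty closed sets and let x̄ : [S,T] → ℝ^n be an F-trajectory: x̄ is absolutely continuous and ẋ̄(t) ∈ F(t, x̄(t)) a.e. Suppose η^{δ}_{ε}(T) < ∞ for some δ, ε > 0. Let {t_j = S + j(T−S)/N}_{j=0}^{N} be the uniform partition of [S,T] into N subintervals with (T−S)/N ≤ ε, and define the time-discretized multifunction F_N(t,x) := F(t_j, x) for t ∈ [t_j, t_{j+1}), j = 0,…,N−1, and F_N(t,x) := F(t_{N−1}, x) for t ∈ [t_{N−1}, T]. Then ∫_S^T dist(ẋ̄(t), F_N(t, x̄(t))) dt ≤ ((T−S)/N) · (η^{δ}_{ε}(T) − η^{δ}_{ε}(S)), where dist(v, K) := inf{ |v − w| : w ∈ K }. In particular this bound tends to 0 as N → ∞. -/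

import Mathlib

open Set Metric Filter MeasureTheory
open scoped ENNReal Topology Classical

noncomputable section

/-- Euclidean space `ℝ^n`. -/
abbrev Eucl (n : ℕ) : Type := EuclideanSpace ℝ (Fin n)

/-- A (strict) partition `a = τ 0 < τ 1 < ⋯ < τ N = b` of the interval `[a,b]`. -/
def IsPartition (a b : ℝ) (N : ℕ) (τ : ℕ → ℝ) : Prop :=
  0 < N ∧ τ 0 = a ∧ τ N = b ∧ ∀ i < N, τ i < τ (i + 1)

/-- The mesh (diameter) of the partition `τ` is at most `ε`. -/
def MeshLE (N : ℕ) (τ : ℕ → ℝ) (ε : ℝ) : Prop :=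
  ∀ i < N, τ (i + 1) - τ i ≤ ε

/-- The tube `x̄([s,t]) + δ B` around the arc `x̄` on `[s,t]`. -/
def tube {n : ℕ} (xbar : ℝ → Eucl n) (s t δ : ℝ) : Set (Eucl n) :=
  {y | ∃ r ∈ Icc s t, dist y (xbar r) ≤ δ}

/-- `I^δ(𝒯) = Σᵢ sup { d_H (F(t_{i+1},x,a), F(t_i,x,a)) : x ∈ x̄([t_i,t_{i+1}]) + δB, a ∈ A }`. -/
def variSum {n k : ℕ} (F : ℝ → Eucl n → Eucl k → Set (Eucl n)) (xbar : ℝ → Eucl n)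
    (A : Set (Eucl k)) (δ : ℝ) (N : ℕ) (τ : ℕ → ℝ) : ℝ≥0∞ :=
  ∑ i ∈ Finset.range N,
    ⨆ x ∈ tube xbar (τ i) (τ (i + 1)) δ, ⨆ a ∈ A,
      EMetric.hausdorffEdist (F (τ (i + 1)) x a) (F (τ i) x a)

/-- `η^δ_ε(t)`: the `(δ,ε)`-perturbed cumulative variation of `F` along `x̄`, uniformly
over `A`, on the base interval `[S,t]`.  (For `t = S` there are no partitions and the
supremum is `0`.) -/
def etaE {n k : ℕ} (F : ℝ → Eucl n → Eucl k → Set (Eucl n)) (xbar : ℝ → Eucl n)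
    (A : Set (Eucl k)) (S δ ε t : ℝ) : ℝ≥0∞ :=
  ⨆ (N : ℕ) (τ : ℕ → ℝ) (_ : IsPartition S t N τ) (_ : MeshLE N τ ε),
    variSum F xbar A δ N τ

/-- `η^δ(t) = lim_{ε ↓ 0} η^δ_ε(t)` (the limit of a monotone family: the infimum). -/
def etaD {n k : ℕ} (F : ℝ → Eucl n → Eucl k → Set (Eucl n)) (xbar : ℝ → Eucl n)
    (A : Set (Eucl k)) (S δ t : ℝ) : ℝ≥0∞ :=
  ⨅ (ε : ℝ) (_ : 0 < ε), etaE F xbar A S δ ε t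

/-- `η(t) = lim_{δ ↓ 0} η^δ(t)`: the cumulative variation function of `F` along `x̄`,
uniformly over `A`. -/
def eta {n k : ℕ} (F : ℝ → Eucl n → Eucl k → Set (Eucl n)) (xbar : ℝ → Eucl n)
    (A : Set (Eucl k)) (S t : ℝ) : ℝ≥0∞ :=
  ⨅ (δ : ℝ) (_ : 0 < δ), etaD F xbar A S δ t

/-- Hypothesis (C1): nonempty closed values, measurability in `t`, and uniform
boundedness `F(t,x,a) ⊆ cB` near the arc. -/
def HypC1 {n k : ℕ} (F : ℝ → Eucl n → Eucl k → Set (Eucl n)) (xbar : ℝ → Eucl n)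
    (A : Set (Eucl k)) (S T δbar : ℝ) : Prop :=
  (∀ t x a, (F t x a).Nonempty ∧ IsClosed (F t x a)) ∧
  (∀ (x : Eucl n) (a : Eucl k), ∀ U : Set (Eucl n), IsOpen U →
     MeasurableSet {t | t ∈ Icc S T ∧ (F t x a ∩ U).Nonempty}) ∧
  (∃ c > (0 : ℝ), ∀ t ∈ Icc S T, ∀ a ∈ A, ∀ x : Eucl n, dist x (xbar t) ≤ δbar →
     F t x a ⊆ closedBall 0 c)

/-- Hypothesis (C2): `F(t,x,a) ⊆ F(t,x',a') + γ(|x-x'| + |a-a'|)B` near the arc, where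
`γ` is a modulus of continuity. -/
def HypC2 {n k : ℕ} (F : ℝ → Eucl n → Eucl k → Set (Eucl n)) (xbar : ℝ → Eucl n)
    (A : Set (Eucl k)) (S T δbar : ℝ) (γ : ℝ → ℝ) : Prop :=
  ContinuousOn γ (Ici 0) ∧ MonotoneOn γ (Ici 0) ∧ γ 0 = 0 ∧ (∀ r ≥ (0 : ℝ), 0 ≤ γ r) ∧
  ∀ t ∈ Icc S T, ∀ x x' : Eucl n, ∀ a ∈ A, ∀ a' ∈ A,
    dist x (xbar t) ≤ δbar → dist x' (xbar t) ≤ δbar →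
    ∀ y ∈ F t x a, ∃ z ∈ F t x' a', dist y z ≤ γ (dist x x' + dist a a')

end

noncomputable section

/-- The grid point `t_j = S + j (T-S)/N` associated with `t ∈ [S,T]` for the uniform
partition of `[S,T]` into `N` subintervals: `j` is the index with `t ∈ [t_j, t_{j+1})`
for `j ≤ N-2`, and `j = N-1` for `t ∈ [t_{N-1}, T]`. -/
def gridPoint (S T : ℝ) (N : ℕ) (t : ℝ) : ℝ :=
  S + ((min (N - 1) (⌊(t - S) * N / (T - S)⌋.toNat) : ℕ) : ℝ) * (T - S) / N

end


lemma etaE_self_eq_zero {n k : ℕ} (F : ℝ → Eucl n → Eucl k → Set (Eucl n))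
    (xbar : ℝ → Eucl n) (A : Set (Eucl k)) (S δ ε : ℝ) :
    etaE F xbar A S δ ε S = 0 := by
  refine le_antisymm ?_ zero_le
  rw [etaE]
  refine iSup_le fun M => iSup_le fun τ => iSup_le fun hp => iSup_le fun _ => ?_
  exfalso
  obtain ⟨hM, h0, hMN, hinc⟩ := hp
  have key : ∀ i, i ≤ M → 0 < i → τ 0 < τ i := by
    intro i hi hpos
    induction i with
    | zero => omega
    | succ m ih =>
      rcases Nat.eq_zero_or_pos m with rfl | hm
      · simpa using hinc 0 hM
      · exact lt_trans (ih (by omega) hm) (hinc m (by omega))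
  have h2 := key M le_rfl hM
  rw [h0, hMN] at h2
  exact lt_irrefl _ h2

lemma gridPoint_eq_of_mem (S T : ℝ) (hST : S < T) (N : ℕ) (hN : 0 < N) (j : ℕ) (hj : j < N)
    (t : ℝ) (ht1 : S + (j : ℝ) * ((T - S) / N) < t)
    (ht2 : t < S + ((j : ℝ) + 1) * ((T - S) / N)) :
    gridPoint S T N t = S + (j : ℝ) * ((T - S) / N) := by
  have hTS : (0:ℝ) < T - S := by linarith
  have hNpos : (0:ℝ) < (N:ℝ) := by exact_mod_cast hN
  have hx1 : (j:ℝ) ≤ (t - S) * N / (T - S) := by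
    rw [le_div_iff₀ hTS]
    have h1 : (j:ℝ) * ((T - S) / N) < t - S := by linarith
    have h2 := mul_lt_mul_of_pos_right h1 hNpos
    have h3 : (j:ℝ) * ((T - S) / N) * N = (j:ℝ) * (T - S) := by field_simp
    linarith
  have hx2 : (t - S) * N / (T - S) < (j:ℝ) + 1 := by
    rw [div_lt_iff₀ hTS]
    have h1 : t - S < ((j:ℝ) + 1) * ((T - S) / N) := by linarith
    have h2 := mul_lt_mul_of_pos_right h1 hNpos
    have h3 : ((j:ℝ) + 1) * ((T - S) / N) * N = ((j:ℝ) + 1) * (T - S) := by field_simp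
    linarith
  have hfloor : ⌊(t - S) * N / (T - S)⌋ = (j : ℤ) := by
    rw [Int.floor_eq_iff]
    constructor
    · exact_mod_cast hx1
    · push_cast
      exact hx2
  rw [gridPoint, hfloor]
  have hmin : (min (N - 1) ((j : ℤ).toNat)) = j := by
    rw [Int.toNat_natCast]
    omega
  rw [hmin]
  ring

lemma key_sum {n : ℕ} (S T : ℝ) (hST : S < T)
    (F : ℝ → Eucl n → Set (Eucl n)) (xbar vbar : ℝ → Eucl n)
    (δ ε : ℝ) (hδ : 0 < δ)
    (N : ℕ) (hN : 0 < N) (hmesh : (T - S) / N ≤ ε)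
    (c : ℕ → ℝ)
    (hc : ∀ j < N, c j ∈ Ioo (S + (j:ℝ) * ((T - S) / N)) (S + ((j:ℝ) + 1) * ((T - S) / N)) ∧
          vbar (c j) ∈ F (c j) (xbar (c j))) :
    ∑ j ∈ Finset.range N,
        ENNReal.ofReal (infDist (vbar (c j)) (F (S + (j:ℝ) * ((T - S) / N)) (xbar (c j)))) ≤
      etaE (fun t x _ => F t x) xbar (Set.univ : Set (Eucl 0)) S δ ε T := by
  classical
  have hTS : (0:ℝ) < T - S := by linarith
  have hNpos : (0:ℝ) < (N:ℝ) := by exact_mod_cast hN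
  set h : ℝ := (T - S) / N with hh
  have hpos : 0 < h := div_pos hTS hNpos
  set pt : ℕ → ℝ := fun j => S + (j:ℝ) * h with hptdef
  have hpt_succ : ∀ j : ℕ, pt (j + 1) = pt j + h := by
    intro j; simp only [hptdef]; push_cast; ring
  have hpt_mono : ∀ j : ℕ, pt j < pt (j + 1) := by
    intro j; rw [hpt_succ]; linarith
  have hptN : pt N = T := by
    simp only [hptdef, hh]; field_simp; ring
  have hptsucc' : ∀ j : ℕ, pt (j+1) = S + ((j:ℝ) + 1) * h := by
    intro j; simp only [hptdef]; push_cast; ring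
  set τ : ℕ → ℝ := fun i => if i < 2 * N then (if i % 2 = 0 then pt (i / 2) else c (i / 2)) else T
    with hτdef
  have hτeven : ∀ j, j < N → τ (2 * j) = pt j := by
    intro j hj
    simp only [hτdef]
    rw [if_pos (by omega), if_pos (by omega)]
    congr 1
    omega
  have hτodd : ∀ j, j < N → τ (2 * j + 1) = c j := by
    intro j hj
    simp only [hτdef]
    rw [if_pos (by omega), if_neg (by omega)]
    congr 1
    omega
  have hτ0 : τ 0 = S := by
    have := hτeven 0 hN
    simpa [hptdef] using this
  have hτtop : τ (2 * N) = T := by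
    simp only [hτdef]; rw [if_neg (by omega)]
  have hcIoo : ∀ j, j < N → pt j < c j ∧ c j < pt (j + 1) := by
    intro j hj
    have h1 := (hc j hj).1
    constructor
    · exact h1.1
    · rw [hptsucc']; exact h1.2
  have hinc : ∀ i < 2 * N, τ i < τ (i + 1) := by
    intro i hi
    rcases Nat.even_or_odd i with he | ho
    · obtain ⟨j, hj⟩ := he
      have hjN : j < N := by omega
      have e1 : τ i = pt j := by rw [show i = 2 * j by omega]; exact hτeven j hjN
      have e2 : τ (i + 1) = c j := by rw [show i + 1 = 2 * j + 1 by omega]; exact hτodd j hjN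
      rw [e1, e2]; exact (hcIoo j hjN).1
    · obtain ⟨j, hj⟩ := ho
      have hjN : j < N := by omega
      have e1 : τ i = c j := by rw [show i = 2 * j + 1 by omega]; exact hτodd j hjN
      rcases Nat.lt_or_ge (j + 1) N with hlt | hge
      · have e2 : τ (i + 1) = pt (j + 1) := by
          rw [show i + 1 = 2 * (j + 1) by omega]; exact hτeven (j + 1) hlt
        rw [e1, e2]; exact (hcIoo j hjN).2
      · have hjeq : j + 1 = N := by omega
        have e2 : τ (i + 1) = T := by rw [show i + 1 = 2 * N by omega]; exact hτtop
        rw [e1, e2, ← hptN, ← hjeq]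
        exact (hcIoo j hjN).2
  have hPart : IsPartition S T (2 * N) τ := ⟨by omega, hτ0, hτtop, hinc⟩
  have hMesh : MeshLE (2 * N) τ ε := by
    intro i hi
    rcases Nat.even_or_odd i with he | ho
    · obtain ⟨j, hj⟩ := he
      have hjN : j < N := by omega
      have e1 : τ i = pt j := by rw [show i = 2 * j by omega]; exact hτeven j hjN
      have e2 : τ (i + 1) = c j := by rw [show i + 1 = 2 * j + 1 by omega]; exact hτodd j hjN
      rw [e1, e2]
      have h1 := (hcIoo j hjN).2
      have h2 := hpt_succ j
      have : c j - pt j ≤ h := by linarith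
      linarith [hmesh]
    · obtain ⟨j, hj⟩ := ho
      have hjN : j < N := by omega
      have e1 : τ i = c j := by rw [show i = 2 * j + 1 by omega]; exact hτodd j hjN
      have h1 := (hcIoo j hjN).1
      have h2 := hpt_succ j
      rcases Nat.lt_or_ge (j + 1) N with hlt | hge
      · have e2 : τ (i + 1) = pt (j + 1) := by
          rw [show i + 1 = 2 * (j + 1) by omega]; exact hτeven (j + 1) hlt
        rw [e1, e2]
        have : pt (j + 1) - c j ≤ h := by linarith
        linarith [hmesh]
      · have hjeq : j + 1 = N := by omega
        have e2 : τ (i + 1) = T := by rw [show i + 1 = 2 * N by omega]; exact hτtop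
        rw [e1, e2]
        have h3 : pt (j + 1) = T := by rw [hjeq, hptN]
        have : T - c j ≤ h := by linarith
        linarith [hmesh]
  rw [etaE]
  refine le_trans ?_
    (le_iSup_of_le (2 * N) (le_iSup_of_le τ (le_iSup_of_le hPart (le_iSup_of_le hMesh le_rfl))))
  rw [variSum]
  have hterm : ∀ j ∈ Finset.range N,
      ENNReal.ofReal (infDist (vbar (c j)) (F (S + (j:ℝ) * ((T - S) / N)) (xbar (c j)))) ≤
      ⨆ x ∈ tube xbar (τ (2 * j)) (τ (2 * j + 1)) δ, ⨆ a ∈ (Set.univ : Set (Eucl 0)),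
        EMetric.hausdorffEdist ((fun t x (_ : Eucl 0) => F t x) (τ (2 * j + 1)) x a)
          ((fun t x (_ : Eucl 0) => F t x) (τ (2 * j)) x a) := by
    intro j hjm
    have hj : j < N := Finset.mem_range.mp hjm
    rw [hτeven j hj, hτodd j hj]
    have hmem : xbar (c j) ∈ tube xbar (pt j) (c j) δ := by
      refine ⟨c j, ⟨(hcIoo j hj).1.le, le_rfl⟩, ?_⟩
      rw [dist_self]; exact hδ.le
    calc ENNReal.ofReal (infDist (vbar (c j)) (F (S + (j:ℝ) * ((T - S) / N)) (xbar (c j))))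
        ≤ EMetric.infEdist (vbar (c j)) (F (pt j) (xbar (c j))) := by
          rw [Metric.infDist]
          exact ENNReal.ofReal_toReal_le
      _ ≤ EMetric.hausdorffEdist (F (c j) (xbar (c j))) (F (pt j) (xbar (c j))) :=
          EMetric.infEdist_le_hausdorffEdist_of_mem (hc j hj).2
      _ ≤ _ := by
          beta_reduce
          exact le_iSup₂_of_le (xbar (c j)) hmem
            (le_iSup₂_of_le (0 : Eucl 0) (mem_univ _) le_rfl)
  calc ∑ j ∈ Finset.range N,
        ENNReal.ofReal (infDist (vbar (c j)) (F (S + (j:ℝ) * ((T - S) / N)) (xbar (c j))))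
      ≤ ∑ j ∈ Finset.range N,
        ⨆ x ∈ tube xbar (τ (2 * j)) (τ (2 * j + 1)) δ, ⨆ a ∈ (Set.univ : Set (Eucl 0)),
          EMetric.hausdorffEdist ((fun t x (_ : Eucl 0) => F t x) (τ (2 * j + 1)) x a)
            ((fun t x (_ : Eucl 0) => F t x) (τ (2 * j)) x a) := Finset.sum_le_sum hterm
    _ = ∑ i ∈ (Finset.range N).image (fun j => 2 * j),
        ⨆ x ∈ tube xbar (τ i) (τ (i + 1)) δ, ⨆ a ∈ (Set.univ : Set (Eucl 0)),
          EMetric.hausdorffEdist ((fun t x (_ : Eucl 0) => F t x) (τ (i + 1)) x a)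
            ((fun t x (_ : Eucl 0) => F t x) (τ i) x a) := by
        rw [Finset.sum_image (fun a _ b _ hab => by omega)]
    _ ≤ _ := by
        refine Finset.sum_le_sum_of_subset ?_
        intro i hi
        simp only [Finset.mem_image, Finset.mem_range] at hi ⊢
        obtain ⟨j, hj, rfl⟩ := hi
        omega

/-- For an `F`-trajectory `x̄` (with integrable derivative `v̄`) and
the time-discretized multifunction `F_N(t,x) = F(t_j,x)` on `[t_j,t_{j+1})` built from
the uniform partition of `[S,T]` into `N` pieces with `(T-S)/N ≤ ε`,
`∫_S^T dist(ẋ̄(t), F_N(t,x̄(t))) dt ≤ ((T-S)/N)(η^δ_ε(T) − η^δ_ε(S))`.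
(`F` is parameter-free; it is encoded with the trivial parameter set `univ ⊆ ℝ⁰`.) -/
theorem stmt17 {n : ℕ} (S T : ℝ) (hST : S < T)
    (F : ℝ → Eucl n → Set (Eucl n))
    (hFval : ∀ t x, (F t x).Nonempty ∧ IsClosed (F t x))
    (xbar vbar : ℝ → Eucl n)
    (hvint : IntegrableOn vbar (Icc S T))
    (hxbar : ∀ t ∈ Icc S T, xbar t = xbar S + ∫ s in S..t, vbar s)
    (htraj : ∀ᵐ t ∂(volume.restrict (Icc S T)), vbar t ∈ F t (xbar t))
    (δ ε : ℝ) (hδ : 0 < δ) (hε : 0 < ε)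
    (hfin : etaE (fun t x _ => F t x) xbar (Set.univ : Set (Eucl 0)) S δ ε T < ⊤)
    (N : ℕ) (hN : 0 < N) (hmesh : (T - S) / N ≤ ε) :
    (∫ t in S..T, infDist (vbar t) (F (gridPoint S T N t) (xbar t))) ≤
      ((T - S) / N) *
        (etaE (fun t x _ => F t x) xbar (Set.univ : Set (Eucl 0)) S δ ε T
          - etaE (fun t x _ => F t x) xbar (Set.univ : Set (Eucl 0)) S δ ε S).toReal := by
  classical
  have hTS : (0:ℝ) < T - S := sub_pos.mpr hST
  have hNR : (0:ℝ) < (N:ℝ) := by exact_mod_cast hN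
  rw [etaE_self_eq_zero, tsub_zero]
  set h : ℝ := (T - S) / N with hh
  have hpos : 0 < h := div_pos hTS hNR
  set f : ℝ → ℝ := fun t => infDist (vbar t) (F (gridPoint S T N t) (xbar t)) with hfdef
  set E := etaE (fun t x _ => F t x) xbar (Set.univ : Set (Eucl 0)) S δ ε T with hEdef
  have hRHS0 : 0 ≤ h * E.toReal := mul_nonneg hpos.le ENNReal.toReal_nonneg
  by_cases hint : IntervalIntegrable f volume S T
  swap
  · rw [intervalIntegral.integral_undef hint]; exact hRHS0
  set pt : ℕ → ℝ := fun j => S + (j:ℝ) * h with hptdef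
  have hpt_succ : ∀ j : ℕ, pt (j + 1) = pt j + h := by
    intro j; simp only [hptdef]; push_cast; ring
  have hpt_mono : ∀ j : ℕ, pt j < pt (j + 1) := fun j => by rw [hpt_succ]; linarith
  have hpt_le : ∀ a b : ℕ, a ≤ b → pt a ≤ pt b :=
    fun a b hab => (monotone_nat_of_le_succ fun j => (hpt_mono j).le) hab
  have hpt0 : pt 0 = S := by simp [hptdef]
  have hptN : pt N = T := by simp only [hptdef, hh]; field_simp; ring
  have hptsucc' : ∀ j : ℕ, pt (j + 1) = S + ((j:ℝ) + 1) * h := by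
    intro j; simp only [hptdef]; push_cast; ring
  -- grid point identification
  have hgrid : ∀ j < N, ∀ t ∈ Ioo (pt j) (pt (j + 1)), gridPoint S T N t = pt j := by
    intro j hj t ht
    have h1 : S + (j:ℝ) * ((T - S) / N) < t := by rw [← hh]; exact ht.1
    have h2 : t < S + ((j:ℝ) + 1) * ((T - S) / N) := by
      rw [← hh, ← hptsucc']; exact ht.2
    have := gridPoint_eq_of_mem S T hST N hN j hj t h1 h2
    rw [this, ← hh]
  -- a.e. trajectory property on each subinterval
  have hIooIcc : ∀ j < N, Ioo (pt j) (pt (j + 1)) ⊆ Icc S T := by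
    intro j hj t ht
    constructor
    · calc S = pt 0 := hpt0.symm
        _ ≤ pt j := hpt_le 0 j (Nat.zero_le _)
        _ ≤ t := ht.1.le
    · calc t ≤ pt (j + 1) := ht.2.le
        _ ≤ pt N := hpt_le (j + 1) N hj
        _ = T := hptN
  have hae : ∀ j < N, ∀ᵐ t ∂(volume.restrict (Ioo (pt j) (pt (j + 1)))),
      vbar t ∈ F t (xbar t) := by
    intro j hj
    exact ae_restrict_of_ae_restrict_of_subset (hIooIcc j hj) htraj
  -- nonempty selections
  have hNE : ∀ j < N, ∃ t, t ∈ Ioo (pt j) (pt (j + 1)) ∧ vbar t ∈ F t (xbar t) := by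
    intro j hj
    by_contra hcon
    push_neg at hcon
    have h3 : ∀ᵐ t ∂(volume.restrict (Ioo (pt j) (pt (j + 1)))), False := by
      filter_upwards [ae_restrict_mem measurableSet_Ioo, hae j hj] with t h1 h2
      exact hcon t h1 h2
    have h4 : volume.restrict (Ioo (pt j) (pt (j + 1))) = 0 :=
      ae_eq_bot.mp (Filter.eventually_false_iff_eq_bot.mp h3)
    have h5 : volume (Ioo (pt j) (pt (j + 1))) = 0 := by
      have := congrArg (fun μ : Measure ℝ => μ (Ioo (pt j) (pt (j + 1)))) h4
      simpa [Measure.restrict_apply, measurableSet_Ioo] using this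
    rw [Real.volume_Ioo, ENNReal.ofReal_eq_zero] at h5
    linarith [hpt_mono j]
  -- key inequality for selections
  have hkey : ∀ c : ℕ → ℝ,
      (∀ j < N, c j ∈ Ioo (pt j) (pt (j + 1)) ∧ vbar (c j) ∈ F (c j) (xbar (c j))) →
      ∑ j ∈ Finset.range N,
        ENNReal.ofReal (infDist (vbar (c j)) (F (pt j) (xbar (c j)))) ≤ E := by
    intro c hc
    have hc' : ∀ j < N, c j ∈ Ioo (S + (j:ℝ) * ((T - S) / N)) (S + ((j:ℝ) + 1) * ((T - S) / N)) ∧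
        vbar (c j) ∈ F (c j) (xbar (c j)) := by
      intro j hj
      refine ⟨?_, (hc j hj).2⟩
      have := (hc j hj).1
      rw [hptsucc'] at this
      rw [← hh]
      exact this
    have := key_sum S T hST F xbar vbar δ ε hδ N hN hmesh c hc'
    rw [hEdef]
    refine le_trans (le_of_eq ?_) this
    refine Finset.sum_congr rfl fun j _ => ?_
    rw [← hh]
  -- the nonnegative integrand in ℝ≥0∞
  set ψ : ℝ → ℝ≥0∞ := fun t => ENNReal.ofReal (f t) with hψdef
  have hψ_eq : ∀ j < N, ∀ t ∈ Ioo (pt j) (pt (j + 1)),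
      ψ t = ENNReal.ofReal (infDist (vbar t) (F (pt j) (xbar t))) := by
    intro j hj t ht
    simp only [hψdef, hfdef, hgrid j hj t ht]
  -- essential suprema
  set s : ℕ → ℝ≥0∞ := fun j => essSup ψ (volume.restrict (Ioo (pt j) (pt (j + 1)))) with hsdef
  have hbddE : ∀ j < N, ∀ t ∈ Ioo (pt j) (pt (j + 1)),
      vbar t ∈ F t (xbar t) → ψ t ≤ E := by
    intro j hj t ht htG
    choose c0 hc0 using hNE
    set c : ℕ → ℝ := fun i => if i = j then t else if hi : i < N then c0 i hi else 0 with hcdef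
    have hcprop : ∀ i < N, c i ∈ Ioo (pt i) (pt (i + 1)) ∧ vbar (c i) ∈ F (c i) (xbar (c i)) := by
      intro i hi
      by_cases hij : i = j
      · subst hij; simp only [hcdef, if_pos rfl]; exact ⟨ht, htG⟩
      · simp only [hcdef, if_neg hij, dif_pos hi]; exact hc0 i hi
    have hsum := hkey c hcprop
    have hcj : c j = t := by simp [hcdef]
    have hle : ENNReal.ofReal (infDist (vbar (c j)) (F (pt j) (xbar (c j)))) ≤
        ∑ i ∈ Finset.range N, ENNReal.ofReal (infDist (vbar (c i)) (F (pt i) (xbar (c i)))) :=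
      Finset.single_le_sum
        (f := fun i => ENNReal.ofReal (infDist (vbar (c i)) (F (pt i) (xbar (c i)))))
        (fun i _ => zero_le) (Finset.mem_range.mpr hj)
    rw [hψ_eq j hj t ht, ← hcj]
    exact le_trans hle hsum
  have hsE : ∀ j < N, s j ≤ E := by
    intro j hj
    refine essSup_le_of_ae_le _ ?_
    filter_upwards [ae_restrict_mem measurableSet_Ioo, hae j hj] with t h1 h2
    exact hbddE j hj t h1 h2
  -- sum of essential suprema is at most E
  have hsum : ∑ j ∈ Finset.range N, s j ≤ E := by
    refine ENNReal.le_of_forall_pos_le_add fun θ hθ hEtop => ?_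
    set θ' : ℝ≥0∞ := (θ : ℝ≥0∞) / N with hθ'def
    have hθ'0 : θ' ≠ 0 := by
      rw [hθ'def, Ne, ENNReal.div_eq_zero_iff]
      push_neg
      exact ⟨by exact_mod_cast hθ.ne', ENNReal.natCast_ne_top N⟩
    have hpick : ∀ j < N, ∃ t, (t ∈ Ioo (pt j) (pt (j + 1)) ∧ vbar t ∈ F t (xbar t)) ∧
        s j ≤ ψ t + θ' := by
      intro j hj
      by_contra hcon
      push_neg at hcon
      have hae2 : ∀ᵐ t ∂(volume.restrict (Ioo (pt j) (pt (j + 1)))), ψ t ≤ s j - θ' := by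
        filter_upwards [ae_restrict_mem measurableSet_Ioo, hae j hj] with t h1 h2
        have hθ'top : θ' ≠ ⊤ := by
          rw [hθ'def]
          exact (ENNReal.div_lt_top ENNReal.coe_ne_top (by exact_mod_cast hN.ne')).ne
        exact (ENNReal.cancel_of_ne hθ'top).le_tsub_of_add_le_right (hcon t ⟨h1, h2⟩).le
      have h4 : s j ≤ s j - θ' := essSup_le_of_ae_le _ hae2
      obtain ⟨t0, ht0⟩ := hNE j hj
      have h5 : θ' < s j := lt_of_le_of_lt (self_le_add_left θ' (ψ t0)) (hcon t0 ht0)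
      have h6 : s j - θ' < s j :=
        ENNReal.sub_lt_self (ne_top_of_le_ne_top hEtop.ne (hsE j hj))
          (by intro h0; rw [h0] at h5; exact (not_lt_bot h5)) hθ'0
      exact absurd (lt_of_le_of_lt h4 h6) (lt_irrefl _)
    choose! c hc1 hc2 using hpick
    have hccprop : ∀ j < N, c j ∈ Ioo (pt j) (pt (j + 1)) ∧ vbar (c j) ∈ F (c j) (xbar (c j)) :=
      fun j hj => hc1 j hj
    have hkey2 := hkey c hccprop
    have hNθ : (N : ℝ≥0∞) * θ' = θ := by
      rw [hθ'def]
      exact ENNReal.mul_div_cancel (by exact_mod_cast hN.ne') (ENNReal.natCast_ne_top N)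
    calc ∑ j ∈ Finset.range N, s j
        ≤ ∑ j ∈ Finset.range N, (ψ (c j) + θ') :=
          Finset.sum_le_sum fun j hj => hc2 j (Finset.mem_range.mp hj)
      _ = (∑ j ∈ Finset.range N, ψ (c j)) + N * θ' := by
          rw [Finset.sum_add_distrib, Finset.sum_const, Finset.card_range, nsmul_eq_mul]
      _ ≤ E + θ := by
          refine add_le_add ?_ (le_of_eq hNθ)
          refine le_trans (le_of_eq ?_) hkey2
          refine Finset.sum_congr rfl fun j hj => ?_
          exact hψ_eq j (Finset.mem_range.mp hj) (c j) (hc1 j (Finset.mem_range.mp hj)).1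
  -- per subinterval lintegral bound
  have hInt_j : ∀ j < N, ∫⁻ t in Ioc (pt j) (pt (j + 1)), ψ t ≤ ENNReal.ofReal h * s j := by
    intro j hj
    have hre : volume.restrict (Ioc (pt j) (pt (j + 1))) =
        volume.restrict (Ioo (pt j) (pt (j + 1))) :=
      (Measure.restrict_congr_set Ioo_ae_eq_Ioc).symm
    rw [hre]
    calc ∫⁻ t in Ioo (pt j) (pt (j + 1)), ψ t
        ≤ ∫⁻ _ in Ioo (pt j) (pt (j + 1)), s j := lintegral_mono_ae (ENNReal.ae_le_essSup ψ)
      _ = s j * volume (Ioo (pt j) (pt (j + 1))) := setLIntegral_const _ _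
      _ = ENNReal.ofReal h * s j := by
          rw [Real.volume_Ioo]
          have : pt (j + 1) - pt j = h := by rw [hpt_succ]; ring
          rw [this, mul_comm]
  -- combine subintervals
  have hsplit : ∀ k ≤ N, ∫⁻ t in Ioc S (pt k), ψ t ≤
      ∑ j ∈ Finset.range k, ENNReal.ofReal h * s j := by
    intro k
    induction k with
    | zero => intro _; simp [hpt0]
    | succ m ih =>
      intro hm
      have h1 : S ≤ pt m := hpt0 ▸ hpt_le 0 m (Nat.zero_le _)
      have hsp : Ioc S (pt (m + 1)) = Ioc S (pt m) ∪ Ioc (pt m) (pt (m + 1)) :=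
        (Ioc_union_Ioc_eq_Ioc h1 (hpt_mono m).le).symm
      rw [hsp, Measure.restrict_union (Ioc_disjoint_Ioc_of_le le_rfl) measurableSet_Ioc,
        lintegral_add_measure, Finset.sum_range_succ]
      exact add_le_add (ih (by omega)) (hInt_j m (by omega))
  have hmain : ∫⁻ t in Ioc S T, ψ t ≤ ENNReal.ofReal h * E := by
    have h1 := hsplit N le_rfl
    rw [hptN] at h1
    calc ∫⁻ t in Ioc S T, ψ t ≤ ∑ j ∈ Finset.range N, ENNReal.ofReal h * s j := h1
      _ = ENNReal.ofReal h * ∑ j ∈ Finset.range N, s j := (Finset.mul_sum _ _ _).symm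
      _ ≤ ENNReal.ofReal h * E := mul_le_mul_right hsum _
  -- conclude
  rw [intervalIntegral.integral_of_le hST.le]
  have hnn : 0 ≤ᵐ[volume.restrict (Ioc S T)] f :=
    Filter.Eventually.of_forall fun t => infDist_nonneg
  have hmeas : AEStronglyMeasurable f (volume.restrict (Ioc S T)) := hint.1.aestronglyMeasurable
  rw [MeasureTheory.integral_eq_lintegral_of_nonneg_ae hnn hmeas]
  have hne : ENNReal.ofReal h * E ≠ ⊤ := ENNReal.mul_ne_top ENNReal.ofReal_ne_top hfin.ne
  calc (∫⁻ t in Ioc S T, ENNReal.ofReal (f t)).toReal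
      ≤ (ENNReal.ofReal h * E).toReal := ENNReal.toReal_mono hne hmain
    _ = h * E.toReal := by rw [ENNReal.toReal_mul, ENNReal.toReal_ofReal hpos.le]
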